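/- For every integer n ≥ 2, a_n = ∑_{k=1}^{n-1} C(n-2, k-1) · ((k-1)! - a_k) · a_{n-k}, where a_n = ∑_{k=1}^{n} (-1)^(k-1) (k-1)! c(n,k) and c(n,k) is the unsigned Stirling number of the first kind. -/

import Mathlib

/-- The number of cycles (orbits, including fixed points) of a permutation. -/
noncomputable def cycleCount {n : ℕ} (σ : Equiv.Perm (Fin n)) : ℕ :=
  Nat.card (Quotient (MulAction.orbitRel (Subgroup.zpowers σ) (Fin n)))

/-- The unsigned Stirling number of the first kind: the number of permutations of an
`n`-element set with exactly `k` cycles. -/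
noncomputable def stirling1 (n k : ℕ) : ℕ :=
  Nat.card {σ : Equiv.Perm (Fin n) // cycleCount σ = k}

/-- `a n = ∑_{k=1}^n (-1)^(k-1) (k-1)! c(n,k)`. -/
noncomputable def a (n : ℕ) : ℤ :=
  ∑ k ∈ Finset.Icc 1 n, (-1 : ℤ) ^ (k - 1) * (Nat.factorial (k - 1) : ℤ) * (stirling1 n k : ℤ)

open Equiv Equiv.Perm Finset

namespace Stmt10

/-- orbit-count for a permutation of any type -/
noncomputable def cc {α : Type*} (σ : Equiv.Perm α) : ℕ :=
  Nat.card (Quotient (MulAction.orbitRel (Subgroup.zpowers σ) α))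

lemma orbitRel_iff {α : Type*} (σ : Perm α) (x y : α) :
    (MulAction.orbitRel (Subgroup.zpowers σ) α) x y ↔ σ.SameCycle x y := by
  rw [MulAction.orbitRel_apply, MulAction.mem_orbit_iff]
  constructor
  · rintro ⟨⟨g, k, rfl⟩, hg⟩
    exact Equiv.Perm.SameCycle.symm ⟨k, hg⟩
  · rintro h
    obtain ⟨k, hk⟩ := h.symm
    exact ⟨⟨σ ^ k, k, rfl⟩, hk⟩

lemma sameCycle_iff_nat {α : Type*} [Finite α] (σ : Perm α) (x y : α) :
    σ.SameCycle x y ↔ ∃ i : ℕ, (σ ^ i) x = y := by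
  constructor
  · intro h
    obtain ⟨i, _, hi⟩ := h.exists_pow_eq'
    exact ⟨i, hi⟩
  · rintro ⟨i, rfl⟩
    exact ⟨(i : ℤ), by simp [zpow_natCast]⟩

lemma invariant_helper {α γ : Type*} [Finite α] (σ : Perm α) (f : α → γ)
    (h : ∀ x, f (σ x) = f x) {x y : α} (hxy : σ.SameCycle x y) : f x = f y := by
  rw [sameCycle_iff_nat] at hxy
  obtain ⟨i, rfl⟩ := hxy
  induction i with
  | zero => simp
  | succ i ih => rw [pow_succ', Perm.mul_apply, h, ih]

lemma intertwine_helper {α β : Type*} [Finite α] (σ : Perm α) (τ : Perm β) (f : α → β)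
    (h : ∀ x, τ.SameCycle (f x) (f (σ x))) {x y : α} (hxy : σ.SameCycle x y) :
    τ.SameCycle (f x) (f y) := by
  rw [sameCycle_iff_nat] at hxy
  obtain ⟨i, rfl⟩ := hxy
  induction i with
  | zero => exact Equiv.Perm.SameCycle.refl _ _
  | succ i ih =>
      rw [pow_succ', Perm.mul_apply]
      exact ih.trans (h _)

variable {n : ℕ} (e : Perm (Fin n))

lemma decomp_zero_apply_zero : decomposeFin.symm ((0 : Fin (n+1)), e) 0 = 0 :=
  decomposeFin_symm_apply_zero 0 e

lemma decomp_zero_apply_succ (i : Fin n) :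
    decomposeFin.symm ((0 : Fin (n+1)), e) i.succ = (e i).succ := by
  rw [decomposeFin_symm_apply_succ, Equiv.swap_self]
  rfl

lemma decomp_succ_apply_zero (p : Fin n) :
    decomposeFin.symm (p.succ, e) 0 = p.succ :=
  decomposeFin_symm_apply_zero _ e

lemma decomp_succ_apply_succ (p : Fin n) (i : Fin n) :
    decomposeFin.symm (p.succ, e) i.succ
      = if e i = p then 0 else (e i).succ := by
  rw [decomposeFin_symm_apply_succ]
  rcases eq_or_ne (e i) p with h | h
  · rw [if_pos h, h, Equiv.swap_apply_right]
  · rw [if_neg h, Equiv.swap_apply_of_ne_of_ne (Fin.succ_ne_zero _)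
      (fun hc => h (Fin.succ_injective _ hc))]

/-- Setoid quotient for cc -/
abbrev Q {α : Type*} (σ : Perm α) := Quotient (MulAction.orbitRel (Subgroup.zpowers σ) α)

noncomputable def qmk {α : Type*} (σ : Perm α) (x : α) : Q σ :=
  Quotient.mk (MulAction.orbitRel (Subgroup.zpowers σ) α) x

lemma qmk_eq_iff {α : Type*} (σ : Perm α) (x y : α) :
    qmk σ x = qmk σ y ↔ σ.SameCycle x y := by
  rw [qmk, qmk, Quotient.eq]
  exact orbitRel_iff σ x y

/-- L1 equiv -/
noncomputable def equivL1 : Q (decomposeFin.symm ((0 : Fin (n+1)), e)) ≃ Option (Q e) := by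
  set σ := decomposeFin.symm ((0 : Fin (n+1)), e) with hσ
  refine
  { toFun := Quotient.lift (fun x => Fin.cases none (fun i => some (qmk e i)) x) ?_
    invFun := fun o => o.elim (qmk σ 0) (Quotient.lift (fun i => qmk σ i.succ) ?_)
    left_inv := ?_
    right_inv := ?_ }
  · intro x y hxy
    replace hxy : _root_.Equiv.Perm.SameCycle _ x y := (orbitRel_iff _ x y).mp hxy
    refine invariant_helper σ _ (fun z => ?_) hxy
    cases z using Fin.cases with
    | zero => rw [decomp_zero_apply_zero]
    | succ i =>
        rw [decomp_zero_apply_succ]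
        simp only [Fin.cases_succ]
        congr 1
        rw [qmk_eq_iff]
        exact Equiv.Perm.SameCycle.symm ⟨1, by rw [zpow_one]⟩
  · intro i j hij
    replace hij : _root_.Equiv.Perm.SameCycle _ i j := (orbitRel_iff _ i j).mp hij
    rw [qmk_eq_iff]
    refine intertwine_helper e σ Fin.succ (fun z => ⟨1, ?_⟩) hij
    rw [zpow_one]
    show decomposeFin.symm ((0 : Fin (n+1)), e) z.succ = (e z).succ
    exact decomp_zero_apply_succ e z
  · intro q
    induction q using Quotient.ind with
    | _ x =>
      cases x using Fin.cases with
      | zero => rfl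
      | succ i => rfl
  · intro o
    cases o with
    | none => rfl
    | some q =>
        induction q using Quotient.ind with
        | _ i => rfl

/-- L2 equiv -/
noncomputable def equivL2 (p : Fin n) : Q (decomposeFin.symm (p.succ, e)) ≃ Q e := by
  set σ := decomposeFin.symm (p.succ, e) with hσ
  have hstep : ∀ u : Fin n, σ.SameCycle u.succ (e u).succ := by
    intro u
    rcases eq_or_ne (e u) p with h | h
    · refine Equiv.Perm.SameCycle.trans ⟨1, ?_⟩ (⟨1, ?_⟩ : σ.SameCycle 0 (e u).succ)
      · rw [zpow_one]
        show decomposeFin.symm (p.succ, e) u.succ = 0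
        rw [decomp_succ_apply_succ, if_pos h]
      · rw [zpow_one]
        show decomposeFin.symm (p.succ, e) 0 = (e u).succ
        rw [decomp_succ_apply_zero, h]
    · refine ⟨1, ?_⟩
      rw [zpow_one]
      show decomposeFin.symm (p.succ, e) u.succ = (e u).succ
      rw [decomp_succ_apply_succ, if_neg h]
  refine
  { toFun := Quotient.lift (fun x => qmk e (Fin.cases p (fun i => i) x)) ?_
    invFun := Quotient.lift (fun u => qmk σ u.succ) ?_
    left_inv := ?_
    right_inv := ?_ }
  · intro x y hxy
    replace hxy : _root_.Equiv.Perm.SameCycle _ x y := (orbitRel_iff _ x y).mp hxy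
    refine invariant_helper σ (fun x => qmk e (Fin.cases p (fun i => i) x)) (fun z => ?_) hxy
    cases z using Fin.cases with
    | zero =>
        rw [decomp_succ_apply_zero]
        simp
    | succ i =>
        rw [decomp_succ_apply_succ]
        rcases eq_or_ne (e i) p with h | h
        · rw [if_pos h]
          simp only [Fin.cases_zero, Fin.cases_succ]
          rw [qmk_eq_iff, ← h]
          exact Equiv.Perm.SameCycle.symm ⟨1, by rw [zpow_one]⟩
        · rw [if_neg h]
          simp only [Fin.cases_succ]
          rw [qmk_eq_iff]
          exact Equiv.Perm.SameCycle.symm ⟨1, by rw [zpow_one]⟩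
  · intro u v huv
    replace huv : _root_.Equiv.Perm.SameCycle _ u v := (orbitRel_iff _ u v).mp huv
    rw [qmk_eq_iff]
    exact intertwine_helper e σ Fin.succ hstep huv
  · intro q
    induction q using Quotient.ind with
    | _ x =>
      cases x using Fin.cases with
      | zero =>
          show qmk σ p.succ = qmk σ 0
          rw [qmk_eq_iff]
          refine Equiv.Perm.SameCycle.symm (⟨1, ?_⟩ : σ.SameCycle 0 p.succ)
          rw [zpow_one]
          show decomposeFin.symm (p.succ, e) 0 = p.succ
          exact decomp_succ_apply_zero e p
      | succ i => rfl
  · intro q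
    induction q using Quotient.ind with
    | _ u => rfl

lemma nat_card_option {β : Type*} [Finite β] : Nat.card (Option β) = Nat.card β + 1 := by
  letI := Fintype.ofFinite β
  rw [Nat.card_eq_fintype_card, Nat.card_eq_fintype_card, Fintype.card_option]

instance {α : Type*} [Finite α] (σ : Perm α) : Finite (Q σ) := Quotient.finite _

lemma cc_decomp_zero : cc (decomposeFin.symm ((0 : Fin (n+1)), e)) = cc e + 1 := by
  rw [cc, Nat.card_congr (equivL1 e), nat_card_option]; rfl

lemma cc_decomp_succ (p : Fin n) : cc (decomposeFin.symm (p.succ, e)) = cc e :=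
  Nat.card_congr (equivL2 e p)


lemma card_sigma' {ι : Type*} [Fintype ι] (f : ι → Type*) [∀ i, Finite (f i)] :
    Nat.card (Sigma f) = ∑ i, Nat.card (f i) := by
  letI : ∀ i, Fintype (f i) := fun i => Fintype.ofFinite _
  simp [Nat.card_eq_fintype_card]

lemma cc_card_succ (n k : ℕ) :
    Nat.card {σ : Perm (Fin (n+1)) // cc σ = k + 1}
      = Nat.card {e : Perm (Fin n) // cc e = k}
        + n * Nat.card {e : Perm (Fin n) // cc e = k+1} := by
  have h1 : Nat.card {σ : Perm (Fin (n+1)) // cc σ = k + 1}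
      = Nat.card {x : Fin (n+1) × Perm (Fin n) // cc (decomposeFin.symm x) = k + 1} := by
    refine Nat.card_congr (Equiv.subtypeEquiv decomposeFin fun σ => ?_)
    rw [Equiv.symm_apply_apply]
  have h2 : Nat.card {x : Fin (n+1) × Perm (Fin n) // cc (decomposeFin.symm x) = k + 1}
      = Nat.card (Σ p : Fin (n+1), {e : Perm (Fin n) // cc (decomposeFin.symm (p, e)) = k + 1}) :=
    Nat.card_congr (Equiv.subtypeProdEquivSigmaSubtype
      (fun (p : Fin (n+1)) (e : Perm (Fin n)) => cc (decomposeFin.symm (p, e)) = k + 1))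
  rw [h1, h2, card_sigma', Fin.sum_univ_succ]
  congr 1
  · refine Nat.card_congr (Equiv.subtypeEquivRight fun e => ?_)
    rw [cc_decomp_zero]
    omega
  · have h3 : ∀ i : Fin n,
        Nat.card {e : Perm (Fin n) // cc (decomposeFin.symm (i.succ, e)) = k+1}
        = Nat.card {e : Perm (Fin n) // cc e = k+1} := fun i =>
      Nat.card_congr (Equiv.subtypeEquivRight fun e => by rw [cc_decomp_succ])
    rw [Finset.sum_congr rfl (fun i _ => h3 i), Finset.sum_const, card_univ,
      Fintype.card_fin, smul_eq_mul]

lemma cc_ne_zero {m : ℕ} (σ : Perm (Fin (m+1))) : cc σ ≠ 0 := by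
  have h1 : Nonempty (Q σ) := ⟨qmk σ 0⟩
  have h2 : 0 < Nat.card (Q σ) := Nat.card_pos
  exact h2.ne'

lemma cc_card_succ_zero (n : ℕ) : Nat.card {σ : Perm (Fin (n+1)) // cc σ = 0} = 0 := by
  have : IsEmpty {σ : Perm (Fin (n+1)) // cc σ = 0} := ⟨fun x => cc_ne_zero x.1 x.2⟩
  exact Nat.card_of_isEmpty

lemma cc_fin_zero (σ : Perm (Fin 0)) : cc σ = 0 := by
  have : IsEmpty (Q σ) := ⟨fun q => Quotient.ind (motive := fun _ => False) (fun x => x.elim0) q⟩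
  exact Nat.card_of_isEmpty

lemma cc_card_zero_zero : Nat.card {σ : Perm (Fin 0) // cc σ = 0} = 1 := by
  have h : Nat.card {σ : Perm (Fin 0) // cc σ = 0} = Nat.card (Perm (Fin 0)) :=
    Nat.card_congr (Equiv.subtypeUnivEquiv fun σ => cc_fin_zero σ)
  rw [h, Nat.card_eq_fintype_card]
  simp

lemma cc_card_zero_succ (k : ℕ) : Nat.card {σ : Perm (Fin 0) // cc σ = k+1} = 0 := by
  have : IsEmpty {σ : Perm (Fin 0) // cc σ = k+1} :=
    ⟨fun x => by have := cc_fin_zero x.1; omega⟩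
  exact Nat.card_of_isEmpty

/-- recursively defined Stirling numbers of the first kind -/
def S : ℕ → ℕ → ℕ
  | 0, 0 => 1
  | 0, _+1 => 0
  | _+1, 0 => 0
  | n+1, k+1 => S n k + n * S n (k+1)

lemma S_eq_zero_of_lt : ∀ {n k : ℕ}, n < k → S n k = 0
  | 0, 0, h => by omega
  | 0, k+1, _ => rfl
  | n+1, 0, h => by omega
  | n+1, k+1, h => by
      rw [S, S_eq_zero_of_lt (by omega), S_eq_zero_of_lt (by omega)]
      ring


open Polynomial

/-- The polynomials `φ_{n+1}` with `φ_1 = X`, `φ_{m+1} = m φ_m - X² φ_m'`. -/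
noncomputable def ψ : ℕ → ℤ[X]
  | 0 => X
  | n+1 => C ((n : ℤ) + 1) * ψ n - X ^ 2 * derivative (ψ n)

lemma psi_coeff_zero : ∀ n : ℕ, (ψ n).coeff 0 = 0
  | 0 => coeff_X_zero
  | n+1 => by
      rw [ψ, coeff_sub, coeff_C_mul, psi_coeff_zero n, coeff_X_pow_mul']
      simp

lemma psi_coeff : ∀ n k : ℕ,
    (ψ n).coeff (k+1) = (-1 : ℤ)^k * (k.factorial : ℤ) * (S (n+1) (k+1) : ℤ)
  | 0, 0 => by simp [ψ, S]
  | 0, k+1 => by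
      rw [ψ, coeff_X]
      have h1 : S 1 (k+2) = 0 := S_eq_zero_of_lt (by omega)
      rw [h1]
      simp [Nat.succ_ne_zero]
  | n+1, 0 => by
      rw [ψ, coeff_sub, coeff_C_mul, psi_coeff n 0, coeff_X_pow_mul']
      have h1 : S (n+2) 1 = S (n+1) 0 + (n+1) * S (n+1) 1 := rfl
      have h2 : S (n+1) 0 = 0 := rfl
      rw [h1, h2]
      push_cast
      simp
  | n+1, k+1 => by
      rw [ψ, coeff_sub, coeff_C_mul, psi_coeff n (k+1), coeff_X_pow_mul']
      rw [if_pos (by omega : 2 ≤ k + 1 + 1)]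
      have h3 : (k + 1 + 1 - 2) = k := by omega
      rw [h3, coeff_derivative, psi_coeff n k]
      have h1 : S (n+2) (k+2) = S (n+1) (k+1) + (n+1) * S (n+1) (k+2) := rfl
      rw [h1]
      push_cast
      rw [Nat.factorial_succ]
      push_cast
      ring

lemma psi_coeff_high (n k : ℕ) (h : n + 2 ≤ k) : (ψ n).coeff k = 0 := by
  obtain ⟨j, rfl⟩ : ∃ j, k = j + 1 := ⟨k - 1, by omega⟩
  rw [psi_coeff n j, S_eq_zero_of_lt (by omega)]
  simp

lemma psi_natDegree (n : ℕ) : (ψ n).natDegree < n + 2 := by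
  have : (ψ n).natDegree ≤ n + 1 := by
    rw [Polynomial.natDegree_le_iff_coeff_eq_zero]
    intro m hm
    exact psi_coeff_high n m (by omega)
  omega

/-- `W n` encodes `∑ C(n,j) j! ψ_{n-j}`. -/
noncomputable def W (n : ℕ) : ℤ[X] :=
  ∑ j ∈ Finset.range (n+1), C ((n.choose j * j.factorial : ℕ) : ℤ) * ψ (n - j)

/-- `G n` encodes `∑ C(n,j) ψ_j ψ_{n-j}`. -/
noncomputable def G (n : ℕ) : ℤ[X] :=
  ∑ j ∈ Finset.range (n+1), C ((n.choose j : ℕ) : ℤ) * (ψ j * ψ (n - j))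

/-- pointwise step identity -/
lemma psi_step (m j : ℕ) :
    C ((m : ℤ) + 2) * ψ (m - j) - X ^ 2 * derivative (ψ (m - j))
      = ψ (m - j + 1) + C ((j : ℤ) + 1) * ψ (m - j) + (C ((m:ℤ) + 2) - C (((m - j : ℕ) : ℤ) + 1) - C ((j:ℤ)+1)) * ψ (m - j) := by
  have hdef : ψ (m - j + 1) = C (((m - j : ℕ) : ℤ) + 1) * ψ (m - j) - X ^ 2 * derivative (ψ (m - j)) := rfl
  rw [hdef]
  ring

lemma W_succ (n : ℕ) :
    W (n+1) = C ((n : ℤ) + 2) * W n - X ^ 2 * derivative (W n) := by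
  have hder : derivative (W n)
      = ∑ j ∈ Finset.range (n+1), C ((n.choose j * j.factorial : ℕ) : ℤ) * derivative (ψ (n - j)) := by
    rw [W, map_sum]
    refine Finset.sum_congr rfl fun j hj => ?_
    rw [derivative_mul, derivative_C, zero_mul, zero_add]
  rw [hder]
  simp only [W]
  rw [Finset.mul_sum, Finset.mul_sum, ← Finset.sum_sub_distrib]
  have hpt : ∀ j ∈ Finset.range (n+1),
      C ((n:ℤ) + 2) * (C ((n.choose j * j.factorial : ℕ) : ℤ) * ψ (n - j))
        - X ^ 2 * (C ((n.choose j * j.factorial : ℕ) : ℤ) * derivative (ψ (n - j)))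
      = C ((n.choose j * j.factorial : ℕ) : ℤ) * ψ (n - j + 1)
        + C ((n.choose j * (j+1).factorial : ℕ) : ℤ) * ψ (n - j) := by
    intro j hj
    rw [Finset.mem_range] at hj
    have hj' : j ≤ n := by omega
    have key : C ((n : ℤ) + 2) * ψ (n - j) - X ^ 2 * derivative (ψ (n - j))
        = ψ (n - j + 1) + C ((j : ℤ) + 1) * ψ (n - j) := by
      rw [psi_step n j]
      have : ((n - j : ℕ) : ℤ) = (n : ℤ) - (j : ℤ) := by
        push_cast [hj']
        ring
      rw [this]
      simp only [map_add, map_sub, map_mul, map_one, map_ofNat]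
      ring
    calc C ((n:ℤ) + 2) * (C ((n.choose j * j.factorial : ℕ) : ℤ) * ψ (n - j))
          - X ^ 2 * (C ((n.choose j * j.factorial : ℕ) : ℤ) * derivative (ψ (n - j)))
        = C ((n.choose j * j.factorial : ℕ) : ℤ)
            * (C ((n:ℤ) + 2) * ψ (n - j) - X ^ 2 * derivative (ψ (n - j))) := by ring
      _ = C ((n.choose j * j.factorial : ℕ) : ℤ)
            * (ψ (n - j + 1) + C ((j : ℤ) + 1) * ψ (n - j)) := by rw [key]
      _ = C ((n.choose j * j.factorial : ℕ) : ℤ) * ψ (n - j + 1)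
            + C ((n.choose j * (j+1).factorial : ℕ) : ℤ) * ψ (n - j) := by
          rw [Nat.factorial_succ]
          push_cast
          simp only [map_add, map_sub, map_mul, map_one, map_ofNat]
          ring
  rw [Finset.sum_congr rfl hpt, Finset.sum_add_distrib]
  -- now massage to W (n+1)
  rw [Finset.sum_range_succ' (fun i => C (((n+1).choose i * i.factorial : ℕ) : ℤ) * ψ (n + 1 - i))]
  have e1 : ∀ j ∈ Finset.range (n+1),
      C ((n.choose j * j.factorial : ℕ) : ℤ) * ψ (n - j + 1)
      = C ((n.choose j * j.factorial : ℕ) : ℤ) * ψ (n + 1 - j) := by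
    intro j hj
    rw [Finset.mem_range] at hj
    have : n - j + 1 = n + 1 - j := by omega
    rw [this]
  rw [Finset.sum_congr rfl e1]
  have e2 : ∀ i ∈ Finset.range (n+1),
      C (((n+1).choose (i+1) * (i+1).factorial : ℕ) : ℤ) * ψ (n + 1 - (i+1))
      = C ((n.choose (i+1) * (i+1).factorial : ℕ) : ℤ) * ψ (n - i)
        + C ((n.choose i * (i+1).factorial : ℕ) : ℤ) * ψ (n - i) := by
    intro i hi
    have : n + 1 - (i + 1) = n - i := by omega
    rw [this, Nat.choose_succ_succ']
    push_cast
    simp only [map_add, map_sub, map_mul, map_one, map_ofNat]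
    ring
  rw [Finset.sum_congr rfl e2, Finset.sum_add_distrib]
  have e3 : ∑ j ∈ Finset.range (n+1), C ((n.choose j * j.factorial : ℕ) : ℤ) * ψ (n + 1 - j)
      = ∑ i ∈ Finset.range (n+1), C ((n.choose (i+1) * (i+1).factorial : ℕ) : ℤ) * ψ (n - i)
        + C ((n.choose 0 * Nat.factorial 0 : ℕ) : ℤ) * ψ (n + 1) := by
    rw [Finset.sum_range_succ' (fun j => C ((n.choose j * j.factorial : ℕ) : ℤ) * ψ (n + 1 - j)) n]
    rw [Finset.sum_range_succ (fun i => C ((n.choose (i+1) * (i+1).factorial : ℕ) : ℤ) * ψ (n - i)) n]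
    have hz : C ((n.choose (n+1) * (n+1).factorial : ℕ) : ℤ) * ψ (n - n) = 0 := by
      rw [Nat.choose_succ_self]
      simp
    rw [hz, add_zero]
    congr 1
    refine Finset.sum_congr rfl fun i hi => ?_
    rw [Finset.mem_range] at hi
    rw [show n + 1 - (i + 1) = n - i from by omega]
  rw [e3]
  simp only [Nat.choose_zero_right, Nat.factorial_zero, one_mul, Nat.cast_one, map_one,
    Nat.sub_zero]
  ring


lemma G_succ (n : ℕ) :
    G (n+1) = C ((n : ℤ) + 2) * G n - X ^ 2 * derivative (G n) := by
  have hder : derivative (G n)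
      = ∑ j ∈ Finset.range (n+1), C ((n.choose j : ℕ) : ℤ)
          * (derivative (ψ j) * ψ (n - j) + ψ j * derivative (ψ (n - j))) := by
    rw [G, map_sum]
    refine Finset.sum_congr rfl fun j hj => ?_
    rw [derivative_mul, derivative_C, zero_mul, zero_add, derivative_mul]
  rw [hder]
  simp only [G]
  rw [Finset.mul_sum, Finset.mul_sum, ← Finset.sum_sub_distrib]
  have hpt : ∀ j ∈ Finset.range (n+1),
      C ((n:ℤ) + 2) * (C ((n.choose j : ℕ) : ℤ) * (ψ j * ψ (n - j)))
        - X ^ 2 * (C ((n.choose j : ℕ) : ℤ)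
            * (derivative (ψ j) * ψ (n - j) + ψ j * derivative (ψ (n - j))))
      = C ((n.choose j : ℕ) : ℤ) * (ψ (j+1) * ψ (n - j))
        + C ((n.choose j : ℕ) : ℤ) * (ψ j * ψ (n - j + 1)) := by
    intro j hj
    rw [Finset.mem_range] at hj
    have hj' : j ≤ n := by omega
    have d1 : X ^ 2 * derivative (ψ j) = C ((j:ℤ)+1) * ψ j - ψ (j+1) := by
      have h0 : ψ (j+1) = C ((j : ℤ) + 1) * ψ j - X ^ 2 * derivative (ψ j) := rfl
      rw [h0]; ring
    have d2 : X ^ 2 * derivative (ψ (n - j))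
        = C ((n:ℤ) - j + 1) * ψ (n - j) - ψ (n - j + 1) := by
      have h0 : ψ (n - j + 1)
          = C (((n - j : ℕ) : ℤ) + 1) * ψ (n - j) - X ^ 2 * derivative (ψ (n - j)) := rfl
      have h1 : ((n - j : ℕ) : ℤ) = (n : ℤ) - j := by push_cast [hj']; ring
      rw [h0, h1]; ring
    calc C ((n:ℤ) + 2) * (C ((n.choose j : ℕ) : ℤ) * (ψ j * ψ (n - j)))
        - X ^ 2 * (C ((n.choose j : ℕ) : ℤ)
            * (derivative (ψ j) * ψ (n - j) + ψ j * derivative (ψ (n - j))))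
        = C ((n.choose j : ℕ) : ℤ) * (C ((n:ℤ) + 2) * (ψ j * ψ (n - j))
            - ((X^2 * derivative (ψ j)) * ψ (n - j)
              + ψ j * (X^2 * derivative (ψ (n - j))))) := by ring
      _ = _ := by
          rw [d1, d2]
          simp only [map_add, map_sub, map_mul, map_one, map_ofNat]
          ring
  rw [Finset.sum_congr rfl hpt, Finset.sum_add_distrib]
  rw [Finset.sum_range_succ' (fun i => C (((n+1).choose i : ℕ) : ℤ) * (ψ i * ψ (n + 1 - i))) (n+1)]
  have e2 : ∀ i ∈ Finset.range (n+1),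
      C (((n+1).choose (i+1) : ℕ) : ℤ) * (ψ (i+1) * ψ (n + 1 - (i+1)))
      = C ((n.choose (i+1) : ℕ) : ℤ) * (ψ (i+1) * ψ (n - i))
        + C ((n.choose i : ℕ) : ℤ) * (ψ (i+1) * ψ (n - i)) := by
    intro i hi
    rw [show n + 1 - (i+1) = n - i from by omega, Nat.choose_succ_succ']
    push_cast
    simp only [map_add]
    ring
  rw [Finset.sum_congr rfl e2, Finset.sum_add_distrib]
  have e1 : ∀ j ∈ Finset.range (n+1),
      C ((n.choose j : ℕ) : ℤ) * (ψ j * ψ (n - j + 1))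
      = C ((n.choose j : ℕ) : ℤ) * (ψ j * ψ (n + 1 - j)) := by
    intro j hj
    rw [Finset.mem_range] at hj
    rw [show n - j + 1 = n + 1 - j from by omega]
  have e3 : ∑ j ∈ Finset.range (n+1), C ((n.choose j : ℕ) : ℤ) * (ψ j * ψ (n + 1 - j))
      = ∑ i ∈ Finset.range (n+1), C ((n.choose (i+1) : ℕ) : ℤ) * (ψ (i+1) * ψ (n - i))
        + C ((n.choose 0 : ℕ) : ℤ) * (ψ 0 * ψ (n + 1)) := by
    rw [Finset.sum_range_succ' (fun j => C ((n.choose j : ℕ) : ℤ) * (ψ j * ψ (n + 1 - j))) n]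
    rw [Finset.sum_range_succ (fun i => C ((n.choose (i+1) : ℕ) : ℤ) * (ψ (i+1) * ψ (n - i))) n]
    have hz : C ((n.choose (n+1) : ℕ) : ℤ) * (ψ (n+1) * ψ (n - n)) = 0 := by
      rw [Nat.choose_succ_self]
      simp
    rw [hz, add_zero]
    congr 1
    refine Finset.sum_congr rfl fun i hi => ?_
    rw [Finset.mem_range] at hi
    rw [show n + 1 - (i + 1) = n - i from by omega]
  rw [Finset.sum_congr rfl e1, e3]
  simp only [Nat.choose_zero_right, Nat.cast_one, map_one, one_mul, Nat.sub_zero]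
  ring

lemma main (n : ℕ) : ψ (n+1) + G n = W n := by
  induction n with
  | zero =>
      show ψ 1 + G 0 = W 0
      have hX : ψ 0 = X := rfl
      have h0 : ψ 1 = X - X ^ 2 := by
        have h1 : ψ 1 = C ((0 : ℤ) + 1) * ψ 0 - X ^ 2 * derivative (ψ 0) := rfl
        rw [h1, hX]
        simp
      simp only [G, W, zero_add, Finset.sum_range_one, Nat.sub_self, h0, hX, Nat.choose_self,
        Nat.factorial_zero, Nat.cast_one, map_one, one_mul, mul_one, Nat.mul_one]
      ring
  | succ n ih =>
      have h1 : ψ (n+2) = C ((n:ℤ)+2) * ψ (n+1) - X^2 * derivative (ψ (n+1)) := by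
        have h0 : ψ (n+2) = C (((n+1 : ℕ) : ℤ) + 1) * ψ (n+1) - X^2 * derivative (ψ (n+1)) := rfl
        rw [h0]
        push_cast
        ring_nf
      rw [h1, G_succ, W_succ, ← ih]
      rw [derivative_add]
      ring

/-- `a (n+1)` as evaluation -/
noncomputable def ae (n : ℕ) : ℤ := (ψ n).eval 1

lemma main_eval (n : ℕ) :
    ae (n+1) + ∑ j ∈ Finset.range (n+1), (n.choose j : ℤ) * (ae j * ae (n - j))
    = ∑ j ∈ Finset.range (n+1), ((n.choose j * j.factorial : ℕ) : ℤ) * ae (n - j) := by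
  have h := congrArg (Polynomial.eval (1:ℤ)) (main n)
  simpa [G, W, ae, eval_finset_sum] using h

end Stmt10


namespace Stmt10

open Polynomial Finset

lemma stirling1_eq_S : ∀ n k : ℕ, stirling1 n k = S n k := by
  intro n
  induction n with
  | zero =>
      intro k
      cases k with
      | zero => exact cc_card_zero_zero
      | succ k => exact cc_card_zero_succ k
  | succ n ih =>
      intro k
      cases k with
      | zero => exact cc_card_succ_zero n
      | succ k =>
          have h : stirling1 (n+1) (k+1)
              = Nat.card {e : Equiv.Perm (Fin n) // cc e = k}
                + n * Nat.card {e : Equiv.Perm (Fin n) // cc e = k+1} := cc_card_succ n k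
          have h1 : Nat.card {e : Equiv.Perm (Fin n) // cc e = k} = stirling1 n k := rfl
          have h2 : Nat.card {e : Equiv.Perm (Fin n) // cc e = k+1} = stirling1 n (k+1) := rfl
          rw [h, h1, h2, ih k, ih (k+1)]
          rfl

lemma a_succ_eq (n : ℕ) : a (n+1) = ae n := by
  rw [ae, a, eval_eq_sum_range' (psi_natDegree n) 1]
  simp only [one_pow, mul_one]
  rw [Finset.sum_range_succ' (fun i => (ψ n).coeff i) (n+1), psi_coeff_zero, add_zero]
  rw [← Finset.Ico_add_one_right_eq_Icc, Finset.sum_Ico_eq_sum_range]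
  simp only [show n + 1 + 1 - 1 = n + 1 from rfl]
  refine Finset.sum_congr rfl fun i hi => ?_
  rw [psi_coeff n i, stirling1_eq_S]
  simp only [show 1 + i - 1 = i from by omega, show 1 + i = i + 1 from by omega,
    Nat.add_sub_cancel]

end Stmt10

/-- The recurrence `a_n = ∑_{k=1}^{n-1} C(n-2,k-1) ((k-1)! - a_k) a_{n-k}` for `n ≥ 2`. -/
theorem stmt10 (n : ℕ) (hn : 2 ≤ n) :
    a n = ∑ k ∈ Finset.Icc 1 (n - 1),
        ((n - 2).choose (k - 1) : ℤ) * ((Nat.factorial (k - 1) : ℤ) - a k) * a (n - k) := by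
  obtain ⟨m, rfl⟩ : ∃ m, n = m + 2 := ⟨n - 2, by omega⟩
  rw [show m + 2 - 1 = m + 1 from rfl, show m + 2 - 2 = m from rfl]
  rw [← Finset.Ico_add_one_right_eq_Icc, Finset.sum_Ico_eq_sum_range]
  rw [show m + 1 + 1 - 1 = m + 1 from rfl]
  have hterm : ∀ j ∈ Finset.range (m + 1),
      (m.choose (1 + j - 1) : ℤ) * ((Nat.factorial (1 + j - 1) : ℤ) - a (1 + j)) * a (m + 2 - (1 + j))
      = (m.choose j : ℤ) * ((Nat.factorial j : ℤ) - Stmt10.ae j) * Stmt10.ae (m - j) := by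
    intro j hj
    rw [Finset.mem_range] at hj
    rw [show 1 + j - 1 = j from by omega, show 1 + j = j + 1 from by omega,
      show m + 2 - (j + 1) = (m - j) + 1 from by omega, Stmt10.a_succ_eq, Stmt10.a_succ_eq]
  rw [Finset.sum_congr rfl hterm, Stmt10.a_succ_eq (m+1)]
  have hmain := Stmt10.main_eval m
  have hsplit : ∑ j ∈ Finset.range (m + 1),
      (m.choose j : ℤ) * ((Nat.factorial j : ℤ) - Stmt10.ae j) * Stmt10.ae (m - j)
      = ∑ j ∈ Finset.range (m + 1), ((m.choose j * j.factorial : ℕ) : ℤ) * Stmt10.ae (m - j)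
        - ∑ j ∈ Finset.range (m + 1), (m.choose j : ℤ) * (Stmt10.ae j * Stmt10.ae (m - j)) := by
    rw [← Finset.sum_sub_distrib]
    refine Finset.sum_congr rfl fun j hj => ?_
    push_cast
    ring
  rw [hsplit]
  omega
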